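/- arXiv:cs/9909004 — 4 statements merged into one kernel-verified Lean document; each statement's English description precedes it below -/
import Mathlib

section
/- Let r > 0, let 0 < a < r, and let f : [0, a] → ℝ be a convex, continuously differentiable function with f(0) = 0 and f'(0) = 0, such that f(x) > r − √(r² − x²) for all x ∈ (0, a] (the graph of f lies strictly above the circular arc of radius r tangent to the x-axis at the origin). Then the average curvature of the graph of f exceeds 1/r: there exist 0 ≤ x₁ < x₂ ≤ a such that arctan(f'(x₂)) − arctan(f'(x₁)) > (1/r) · ∫_{x₁}^{x₂} √(1 + f'(u)²) du (the right-hand integral is the arc length of the graph of f between x₁ and x₂, and arctan(f'(x)) is the turning angle of the graph at (x, f(x))). -/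
open Real Set

private lemma algLem (r x t : ℝ) (hr : 0 < r) (hx0 : 0 ≤ x) (hxr : x < r) (ht0 : 0 ≤ t)
    (h : t / Real.sqrt (1 + t ^ 2) ≤ x / r) : t ≤ x / Real.sqrt (r ^ 2 - x ^ 2) := by
  have hrx : 0 < r ^ 2 - x ^ 2 := by nlinarith
  set Q := Real.sqrt (r ^ 2 - x ^ 2) with hQdef
  have hQ2 : Q ^ 2 = r ^ 2 - x ^ 2 := Real.sq_sqrt hrx.le
  have hQpos : 0 < Q := Real.sqrt_pos.mpr hrx
  set P := Real.sqrt (1 + t ^ 2) with hPdef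
  have hP2 : P ^ 2 = 1 + t ^ 2 := Real.sq_sqrt (by positivity)
  have hPpos : 0 < P := Real.sqrt_pos.mpr (by positivity)
  rw [div_le_div_iff₀ hPpos hr] at h
  rw [le_div_iff₀ hQpos]
  nlinarith [mul_le_mul h h (by positivity) (by positivity), mul_pos hQpos hPpos,
    sq_nonneg (t * Q - x), sq_nonneg (t * Q + x), mul_nonneg ht0 hQpos.le]

private lemma circInt (r a : ℝ) (hr : 0 < r) (ha : 0 < a) (har : a < r) :
    (∫ u in (0:ℝ)..a, u / Real.sqrt (r ^ 2 - u ^ 2)) = r - Real.sqrt (r ^ 2 - a ^ 2) := by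
  have hint2 : IntervalIntegrable (fun u => u / Real.sqrt (r ^ 2 - u ^ 2))
      MeasureTheory.volume 0 a := by
    apply ContinuousOn.intervalIntegrable
    rw [Set.uIcc_of_le ha.le]
    apply ContinuousOn.div continuousOn_id
    · exact (Real.continuous_sqrt.comp (continuous_const.sub (continuous_pow 2))).continuousOn
    · intro u hu
      have hpos : 0 < r ^ 2 - u ^ 2 := by nlinarith [hu.1, hu.2]
      exact (Real.sqrt_pos.mpr hpos).ne'
  have hG : ∀ u ∈ Set.uIcc (0:ℝ) a,
      HasDerivAt (fun y => -Real.sqrt (r ^ 2 - y ^ 2))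
        (u / Real.sqrt (r ^ 2 - u ^ 2)) u := by
    intro u hu
    rw [Set.uIcc_of_le ha.le] at hu
    have hru : 0 < r ^ 2 - u ^ 2 := by nlinarith [hu.1, hu.2]
    have h1 : HasDerivAt (fun y : ℝ => r ^ 2 - y ^ 2) (-(2 * u)) u := by
      simpa using (hasDerivAt_pow 2 u).const_sub (r ^ 2)
    have h2 : HasDerivAt (fun y : ℝ => Real.sqrt (r ^ 2 - y ^ 2))
        (1 / (2 * Real.sqrt (r ^ 2 - u ^ 2)) * -(2 * u)) u :=
      (Real.hasDerivAt_sqrt hru.ne').comp u h1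
    have hQpos : 0 < Real.sqrt (r ^ 2 - u ^ 2) := Real.sqrt_pos.mpr hru
    have h3 : HasDerivAt (fun y : ℝ => -Real.sqrt (r ^ 2 - y ^ 2))
        (-(1 / (2 * Real.sqrt (r ^ 2 - u ^ 2)) * -(2 * u))) u := h2.neg
    convert h3 using 1
    field_simp
  rw [intervalIntegral.integral_eq_sub_of_hasDerivAt hG hint2]
  have h0 : Real.sqrt (r ^ 2 - 0 ^ 2) = r := by
    rw [show r ^ 2 - (0:ℝ) ^ 2 = r ^ 2 by ring, Real.sqrt_sq hr.le]
  rw [h0]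
  ring

theorem stmt1
    (r a : ℝ) (hr : 0 < r) (ha : 0 < a) (har : a < r)
    (f f' : ℝ → ℝ)
    (hconv : ConvexOn ℝ (Set.Icc 0 a) f)
    (hderiv : ∀ x ∈ Set.Icc (0:ℝ) a, HasDerivWithinAt f (f' x) (Set.Icc 0 a) x)
    (hcont : ContinuousOn f' (Set.Icc 0 a))
    (hf0 : f 0 = 0) (hf'0 : f' 0 = 0)
    (habove : ∀ x ∈ Set.Ioc (0:ℝ) a, f x > r - Real.sqrt (r ^ 2 - x ^ 2)) :
    ∃ x₁ x₂ : ℝ, 0 ≤ x₁ ∧ x₁ < x₂ ∧ x₂ ≤ a ∧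
      Real.arctan (f' x₂) - Real.arctan (f' x₁) >
        (1 / r) * ∫ u in x₁..x₂, Real.sqrt (1 + (f' u) ^ 2) := by
  by_contra hcon
  push_neg at hcon
  -- extension of f' to a globally continuous function
  set e : ℝ → ℝ := fun x => f' (Set.projIcc 0 a ha.le x) with he
  have hecont : Continuous e := (hcont.restrict).comp continuous_projIcc
  have he_eq : ∀ x ∈ Icc (0:ℝ) a, e x = f' x := by
    intro x hx
    simp [he, Set.projIcc_of_mem ha.le hx]
  set q : ℝ → ℝ := fun x => Real.sqrt (1 + e x ^ 2) with hq
  have hqcont : Continuous q :=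
    Real.continuous_sqrt.comp (continuous_const.add (hecont.pow 2))
  have hqnonneg : ∀ x, 0 ≤ q x := fun x => Real.sqrt_nonneg _
  set S : ℝ → ℝ := fun x => ∫ u in (0:ℝ)..x, q u with hS
  have hSd : ∀ x, HasDerivAt S (q x) x := fun x =>
    (hqcont.integral_hasStrictDerivAt 0 x).hasDerivAt
  have hScont : Continuous S := by
    have : Differentiable ℝ S := fun x => (hSd x).differentiableAt
    exact this.continuous
  have hSmono : ∀ x y : ℝ, x ≤ y → S x ≤ S y := by
    intro x y hxy
    have h1 : S x + ∫ u in x..y, q u = S y :=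
      intervalIntegral.integral_add_adjacent_intervals
        (hqcont.intervalIntegrable 0 x) (hqcont.intervalIntegrable x y)
    have h2 : 0 ≤ ∫ u in x..y, q u :=
      intervalIntegral.integral_nonneg hxy (fun u _ => hqnonneg u)
    linarith
  have hS0 : S 0 = 0 := intervalIntegral.integral_same
  have hSnonneg : ∀ x, 0 ≤ x → 0 ≤ S x := fun x hx => hS0 ▸ hSmono 0 x hx
  have hSx : ∀ x ∈ Icc (0:ℝ) a, (∫ u in (0:ℝ)..x, Real.sqrt (1 + f' u ^ 2)) = S x := by
    intro x hx
    apply intervalIntegral.integral_congr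
    intro u hu
    rw [Set.uIcc_of_le hx.1] at hu
    show Real.sqrt (1 + f' u ^ 2) = Real.sqrt (1 + e u ^ 2)
    rw [he_eq u ⟨hu.1, hu.2.trans hx.2⟩]
  -- key consequence of the negated statement
  have key : ∀ x ∈ Ioc (0:ℝ) a, Real.arctan (f' x) ≤ S x / r := by
    intro x hx
    have := hcon 0 x le_rfl hx.1 hx.2
    rw [hf'0, Real.arctan_zero, sub_zero, hSx x ⟨hx.1.le, hx.2⟩] at this
    rw [div_eq_inv_mul, ← one_div]
    exact this
  -- nonnegativity of f'
  have hf'nonneg : ∀ x ∈ Icc (0:ℝ) a, 0 ≤ f' x := by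
    intro x hx
    rcases eq_or_lt_of_le hx.1 with h0 | h0
    · rw [← h0, hf'0]
    · have h1 : f' 0 ≤ slope f 0 x :=
        hconv.le_slope_of_hasDerivWithinAt ⟨le_rfl, ha.le⟩ hx h0 (hderiv 0 ⟨le_rfl, ha.le⟩)
      have h2 : slope f 0 x ≤ f' x :=
        hconv.slope_le_of_hasDerivWithinAt ⟨le_rfl, ha.le⟩ hx h0 (hderiv x hx)
      rw [hf'0] at h1
      linarith
  -- main comparison lemma
  have wkey : ∀ c, 0 < c → c ≤ a → (∀ x ∈ Icc (0:ℝ) c, S x ≤ r * (π / 2)) →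
      ∀ x ∈ Icc (0:ℝ) c, r * Real.sin (S x / r) ≤ x := by
    intro c hc0 hca hbound
    set w : ℝ → ℝ := fun x => r * Real.sin (S x / r) - x with hw
    have hwd : ∀ x, HasDerivAt w (r * (Real.cos (S x / r) * (q x / r)) - 1) x := by
      intro x
      have h1 : HasDerivAt (fun y => S y / r) (q x / r) x := (hSd x).div_const r
      have h2 : HasDerivAt (fun y => Real.sin (S y / r))
          (Real.cos (S x / r) * (q x / r)) x :=
        by have := (Real.hasDerivAt_sin (S x / r)).comp x h1; exact this
      exact (h2.const_mul r).sub (hasDerivAt_id x)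
    have hanti : AntitoneOn w (Icc 0 c) := by
      apply antitoneOn_of_deriv_nonpos (convex_Icc 0 c)
      · exact ((continuous_const.mul (Real.continuous_sin.comp (hScont.div_const r))).sub
          continuous_id).continuousOn
      · intro x _
        exact ((hwd x).differentiableAt).differentiableWithinAt
      · intro x hx
        rw [interior_Icc] at hx
        rw [(hwd x).deriv]
        have hxa : x ∈ Ioc (0:ℝ) a := ⟨hx.1, hx.2.le.trans hca⟩
        have hxIcc : x ∈ Icc (0:ℝ) a := ⟨hxa.1.le, hxa.2⟩
        have h1 : Real.arctan (f' x) ≤ S x / r := key x hxa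
        have h3 : S x / r ≤ π / 2 := by
          have hb := hbound x ⟨hx.1.le, hx.2.le⟩
          rw [div_le_iff₀ hr]
          linarith
        have hcosle : Real.cos (S x / r) ≤ Real.cos (Real.arctan (f' x)) :=
          Real.cos_le_cos_of_nonneg_of_le_pi
            (by rw [← Real.arctan_zero]
                exact Real.arctan_strictMono.monotone (hf'nonneg x hxIcc))
            (h3.trans (by linarith [Real.pi_pos])) h1
        have hqx : q x = Real.sqrt (1 + f' x ^ 2) := by
          show Real.sqrt (1 + e x ^ 2) = Real.sqrt (1 + f' x ^ 2)
          rw [he_eq x hxIcc]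
        have hprod : Real.cos (Real.arctan (f' x)) * q x = 1 := by
          rw [hqx, Real.cos_arctan]
          have hpos : (0:ℝ) < Real.sqrt (1 + f' x ^ 2) := by
            apply Real.sqrt_pos.mpr; positivity
          field_simp
        have h4 : Real.cos (S x / r) * q x ≤ 1 := by
          calc Real.cos (S x / r) * q x ≤ Real.cos (Real.arctan (f' x)) * q x :=
                mul_le_mul_of_nonneg_right hcosle (hqnonneg x)
            _ = 1 := hprod
        have hexp : r * (Real.cos (S x / r) * (q x / r)) = Real.cos (S x / r) * q x := by
          field_simp
        rw [hexp]
        linarith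
    intro x hx
    have hw0 : w 0 = 0 := by simp [hw, hS0]
    have hle := hanti ⟨le_rfl, hc0.le⟩ hx hx.1
    rw [hw0] at hle
    simp only [hw] at hle
    linarith
  -- the cutoff value b
  set b : ℝ := (Real.arcsin (a / r) + π / 2) / 2 with hb
  have harc1 : Real.arcsin (a / r) < π / 2 :=
    Real.arcsin_lt_pi_div_two.mpr ((div_lt_one hr).mpr har)
  have harc0 : 0 ≤ Real.arcsin (a / r) :=
    Real.arcsin_nonneg.mpr (div_nonneg ha.le hr.le)
  have hb1 : Real.arcsin (a / r) < b := by rw [hb]; linarith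
  have hb2 : b < π / 2 := by rw [hb]; linarith
  have hb0 : 0 < b := by rw [hb]; linarith [Real.pi_pos]
  rcases le_or_gt (S a) (r * b) with hcase | hcase
  · -- f' x ≤ x / sqrt (r² - x²) everywhere, so f a ≤ r - sqrt (r² - a²)
    have hbound : ∀ x ∈ Icc (0:ℝ) a, S x ≤ r * (π / 2) := by
      intro x hx
      have := hSmono x a hx.2
      nlinarith
    have main := wkey a ha le_rfl hbound
    have f'le : ∀ x ∈ Icc (0:ℝ) a, f' x ≤ x / Real.sqrt (r ^ 2 - x ^ 2) := by
      intro x hx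
      rcases eq_or_lt_of_le hx.1 with h0 | h0
      · rw [← h0, hf'0]
        positivity
      · have hxa : x ∈ Ioc (0:ℝ) a := ⟨h0, hx.2⟩
        have h1 : Real.arctan (f' x) ≤ S x / r := key x hxa
        have h3 : S x / r ≤ π / 2 := by
          have := hbound x hx
          rw [div_le_iff₀ hr]
          linarith
        have hsin : Real.sin (Real.arctan (f' x)) ≤ Real.sin (S x / r) :=
          Real.sin_le_sin_of_le_of_le_pi_div_two
            (by linarith [Real.neg_pi_div_two_lt_arctan (f' x)]) h3 h1
        have h2 : r * Real.sin (S x / r) ≤ x := main x hx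
        rw [Real.sin_arctan] at hsin
        have h5 : f' x / Real.sqrt (1 + f' x ^ 2) ≤ x / r := by
          calc f' x / Real.sqrt (1 + f' x ^ 2) ≤ Real.sin (S x / r) := hsin
            _ ≤ x / r := by rw [le_div_iff₀ hr]; linarith
        exact algLem r x (f' x) hr hx.1 (lt_of_le_of_lt hx.2 har) (hf'nonneg x hx) h5
    -- integrate the inequality
    have hfc : ContinuousOn f (Icc 0 a) := fun x hx => (hderiv x hx).continuousWithinAt
    have hint1 : IntervalIntegrable f' MeasureTheory.volume 0 a := by
      apply ContinuousOn.intervalIntegrable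
      rwa [Set.uIcc_of_le ha.le]
    have hfa : (∫ u in (0:ℝ)..a, f' u) = f a - f 0 := by
      apply intervalIntegral.integral_eq_sub_of_hasDeriv_right_of_le ha.le hfc _ hint1
      intro x hx
      exact (hderiv x ⟨hx.1.le, hx.2.le⟩).mono_of_mem_nhdsWithin
        (Icc_mem_nhdsGT_of_mem ⟨hx.1.le, hx.2⟩)
    have hcontg : ContinuousOn (fun u => u / Real.sqrt (r ^ 2 - u ^ 2)) (Icc 0 a) := by
      apply ContinuousOn.div continuousOn_id
      · exact (Real.continuous_sqrt.comp (continuous_const.sub (continuous_pow 2))).continuousOn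
      · intro u hu
        have hpos : 0 < r ^ 2 - u ^ 2 := by nlinarith [hu.1, hu.2]
        exact (Real.sqrt_pos.mpr hpos).ne'
    have hint2 : IntervalIntegrable (fun u => u / Real.sqrt (r ^ 2 - u ^ 2))
        MeasureTheory.volume 0 a := by
      apply ContinuousOn.intervalIntegrable
      rwa [Set.uIcc_of_le ha.le]
    have hga : (∫ u in (0:ℝ)..a, u / Real.sqrt (r ^ 2 - u ^ 2))
        = r - Real.sqrt (r ^ 2 - a ^ 2) := circInt r a hr ha har
    have hmono : (∫ u in (0:ℝ)..a, f' u)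
        ≤ ∫ u in (0:ℝ)..a, u / Real.sqrt (r ^ 2 - u ^ 2) :=
      intervalIntegral.integral_mono_on ha.le hint1 hint2 f'le
    have hlast := habove a ⟨ha, le_rfl⟩
    rw [hfa, hf0, sub_zero] at hmono
    rw [hga] at hmono
    linarith
  · -- impossible : arclength cannot reach r*b
    have hrb0 : 0 < r * b := mul_pos hr hb0
    have hmem : r * b ∈ Icc (S 0) (S a) := ⟨by rw [hS0]; exact hrb0.le, hcase.le⟩
    obtain ⟨c, hcIcc, hSc⟩ := intermediate_value_Icc ha.le hScont.continuousOn hmem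
    have hc0 : 0 < c := by
      rcases eq_or_lt_of_le hcIcc.1 with h0 | h0
      · exfalso
        rw [← h0, hS0] at hSc
        linarith
      · exact h0
    have hbound : ∀ x ∈ Icc (0:ℝ) c, S x ≤ r * (π / 2) := by
      intro x hx
      have := hSmono x c hx.2
      rw [hSc] at this
      nlinarith
    have main := wkey c hc0 hcIcc.2 hbound c ⟨hc0.le, le_rfl⟩
    rw [hSc, mul_div_cancel_left₀ _ hr.ne'] at main
    have hsinb : a / r < Real.sin b := by
      have h1 : Real.sin (Real.arcsin (a / r)) < Real.sin b :=
        Real.strictMonoOn_sin ⟨by linarith [Real.pi_pos], by linarith⟩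
          ⟨by linarith [Real.pi_pos], hb2.le⟩ hb1
      rwa [Real.sin_arcsin (by linarith [div_nonneg ha.le hr.le]) ((div_le_one hr).mpr har.le)] at h1
    have haux : a < r * Real.sin b := by
      rw [div_lt_iff₀ hr] at hsinb
      linarith
    linarith [hcIcc.2]
end

section
/- Let p : ℝ → ℝ² be continuously differentiable with p'(t) = (cos Θ(t), sin Θ(t)) for all t, where Θ : ℝ → ℝ is κ-Lipschitz for some κ > 0. Suppose there are c ∈ ℝ², r > 0 and ε > 0 such that ‖p(0) − c‖ = r and ‖p(t) − c‖ ≤ r for all t with |t| < ε (the curve stays inside the closed disk of radius r about c near a point where it touches its boundary). Then κ ≥ 1/r. -/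
set_option maxHeartbeats 1000000

open Metric Set Real


private lemma stmt3_arith (r κ T cosx a b m n : ℝ) (hr : 0 < r) (hκ : 0 < κ) (hT : 0 < T)
    (hxsq : (κ*T)^2 ≤ (1 - r*κ)/4) (hrκ : r*κ < 1)
    (hcos : 1 - (κ*T)^2/2 ≤ cosx)
    (hb : -(r*κ*T^2/2) ≤ b) (ha : T*cosx ≤ a) (hCS : a ≤ m)
    (hexp : n^2 = m^2 + 2*b + r^2) (hle : n ≤ r) (hn : 0 ≤ n) (hm : 0 ≤ m) : False := by
  have hcpos : 0 < cosx := by nlinarith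
  have hapos : 0 < a := by nlinarith
  have h1 : a^2 ≤ m^2 := by nlinarith
  have h2 : T^2*cosx^2 ≤ a^2 := by nlinarith [mul_self_le_mul_self (by positivity : (0:ℝ) ≤ T*cosx) ha]
  have h3 : r*κ < cosx^2 := by nlinarith [sq_nonneg ((κ*T)^2), sq_nonneg (cosx - (1 - (κ*T)^2/2))]
  have h4 : n^2 ≤ r^2 := by nlinarith
  have h5 : 0 < T^2*(cosx^2 - r*κ) := mul_pos (pow_pos hT 2) (by linarith)
  nlinarith

theorem stmt3
    (p : ℝ → EuclideanSpace ℝ (Fin 2)) (Θ : ℝ → ℝ) (κ : ℝ) (hκ : 0 < κ)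
    (hderiv : ∀ t, HasDerivAt p (WithLp.toLp 2 ![Real.cos (Θ t), Real.sin (Θ t)]) t)
    (hlip : LipschitzWith (Real.toNNReal κ) Θ)
    (c : EuclideanSpace ℝ (Fin 2)) (r ε : ℝ) (hr : 0 < r) (hε : 0 < ε)
    (htouch : ‖p 0 - c‖ = r)
    (hinside : ∀ t : ℝ, |t| < ε → ‖p t - c‖ ≤ r) :
    1 / r ≤ κ := by
  by_contra hcon
  push_neg at hcon
  have hrκ : r * κ < 1 := by
    have := (lt_div_iff₀ hr).mp hcon
    linarith
  -- Lipschitz bound on the turning angle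
  have hδ : ∀ s : ℝ, |Θ s - Θ 0| ≤ κ * |s| := by
    intro s
    have := hlip.dist_le_mul s 0
    rw [Real.dist_eq, Real.dist_eq, sub_zero] at this
    rwa [Real.coe_toNNReal κ hκ.le] at this
  set v : EuclideanSpace ℝ (Fin 2) := p 0 - c with hv
  -- perpendicularity at the touch point
  have hperp : Real.cos (Θ 0) * v 0 + Real.sin (Θ 0) * v 1 = 0 := by
    set f : ℝ → ℝ := fun t => inner (𝕜 := ℝ) (p t - c) (p t - c) with hf
    have hd : ∀ s, HasDerivAt f
        (2 * (Real.cos (Θ s) * (p s - c) 0 + Real.sin (Θ s) * (p s - c) 1)) s := by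
      intro s
      have := ((hderiv s).sub_const c).inner ℝ ((hderiv s).sub_const c)
      refine this.congr_deriv ?_
      simp [PiLp.inner_apply, Fin.sum_univ_two]
      ring
    have hmax : IsLocalMax f 0 := by
      filter_upwards [Metric.ball_mem_nhds (0:ℝ) hε] with t ht
      have h1 : ‖p t - c‖ ≤ r := hinside t (by simpa [Real.dist_eq] using ht)
      have h2 : f t = ‖p t - c‖^2 := real_inner_self_eq_norm_sq _
      have h0 : f 0 = ‖p 0 - c‖^2 := real_inner_self_eq_norm_sq _
      rw [h2, h0, htouch]
      exact pow_le_pow_left₀ (norm_nonneg _) h1 2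
    have := hmax.hasDerivAt_eq_zero (hd 0)
    have hveq : (p 0 - c) 0 = v 0 ∧ (p 0 - c) 1 = v 1 := ⟨rfl, rfl⟩
    rw [hveq.1, hveq.2] at this
    linarith
  -- the signed radial coefficient
  set lam : ℝ := v 1 * Real.cos (Θ 0) - v 0 * Real.sin (Θ 0) with hlam
  have hpyth : Real.sin (Θ 0)^2 + Real.cos (Θ 0)^2 = 1 := Real.sin_sq_add_cos_sq _
  have hnormv : v 0 ^ 2 + v 1 ^ 2 = r ^ 2 := by
    have : ‖v‖^2 = v 0 ^2 + v 1 ^2 := by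
      rw [← real_inner_self_eq_norm_sq, PiLp.inner_apply]
      simp [PiLp.inner_apply, Fin.sum_univ_two]
    rw [← this, hv, htouch]
  have hlam2 : lam ^ 2 = r ^ 2 := by
    have : lam ^ 2 + (Real.cos (Θ 0) * v 0 + Real.sin (Θ 0) * v 1)^2
        = (v 0 ^2 + v 1 ^2) * (Real.sin (Θ 0)^2 + Real.cos (Θ 0)^2) := by ring
    rw [hperp, hpyth, hnormv] at this
    linarith [this]
  have hlamabs : |lam| = r := by
    nlinarith [abs_nonneg lam, sq_abs lam]
  -- the test time T
  set T : ℝ := min (ε/2) (Real.sqrt (1 - r*κ) / (2*κ)) with hT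
  have hsq : 0 < Real.sqrt (1 - r*κ) := Real.sqrt_pos.mpr (by linarith)
  have hT0 : 0 < T := lt_min (by linarith) (by positivity)
  have hTε : |T| < ε := by
    rw [abs_of_pos hT0]
    calc T ≤ ε/2 := min_le_left _ _
    _ < ε := by linarith
  have hx1 : κ * T ≤ Real.sqrt (1 - r*κ) / 2 := by
    have h1 : T ≤ Real.sqrt (1 - r*κ) / (2*κ) := min_le_right _ _
    calc κ * T ≤ κ * (Real.sqrt (1 - r*κ) / (2*κ)) := by nlinarith
    _ = Real.sqrt (1 - r*κ) / 2 := by field_simp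
  have hxsq : (κ * T)^2 ≤ (1 - r*κ)/4 := by
    have h2 : (κ*T)^2 ≤ (Real.sqrt (1 - r*κ) / 2)^2 := by
      apply sq_le_sq' _ hx1
      nlinarith
    have h3 : (Real.sqrt (1 - r*κ))^2 = 1 - r*κ := Real.sq_sqrt (by linarith)
    nlinarith
  have hxhalf : κ * T ≤ 1/2 := by
    have h1 : Real.sqrt (1 - r*κ) ≤ Real.sqrt 1 := Real.sqrt_le_sqrt (by have := mul_pos hr hκ; linarith)
    rw [Real.sqrt_one] at h1
    linarith
  have hx0 : 0 < κ * T := by positivity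
  -- δ bounded by κT on [0,T]
  have hδT : ∀ s ∈ Icc (0:ℝ) T, |Θ s - Θ 0| ≤ κ * T := by
    intro s hs
    calc |Θ s - Θ 0| ≤ κ * |s| := hδ s
    _ ≤ κ * T := by
        rw [abs_of_nonneg hs.1]
        exact mul_le_mul_of_nonneg_left hs.2 hκ.le
  -- the tangent direction
  set uvec : EuclideanSpace ℝ (Fin 2) := WithLp.toLp 2 ![Real.cos (Θ 0), Real.sin (Θ 0)] with hu
  -- tangential displacement A and radial displacement B
  set A : ℝ → ℝ := fun s => inner (𝕜 := ℝ) (p s - p 0) uvec with hA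
  set B : ℝ → ℝ := fun s => inner (𝕜 := ℝ) (p s - p 0) v with hB
  have hA' : ∀ s, HasDerivAt A (Real.cos (Θ s - Θ 0)) s := by
    intro s
    have := ((hderiv s).sub_const (p 0)).inner ℝ (hasDerivAt_const s uvec)
    have h2 : Real.cos (Θ s - Θ 0)
        = Real.cos (Θ s) * Real.cos (Θ 0) + Real.sin (Θ s) * Real.sin (Θ 0) :=
      Real.cos_sub _ _
    rw [h2, hA]
    simpa [hu, PiLp.inner_apply, Fin.sum_univ_two, mul_comm] using this
  have hB' : ∀ s, HasDerivAt B (lam * Real.sin (Θ s - Θ 0)) s := by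
    intro s
    have := ((hderiv s).sub_const (p 0)).inner ℝ (hasDerivAt_const s v)
    have key : Real.cos (Θ s) * v 0 + Real.sin (Θ s) * v 1
        = lam * Real.sin (Θ s - Θ 0) := by
      rw [Real.sin_sub, hlam]
      linear_combination (Real.cos (Θ s) * Real.cos (Θ 0) + Real.sin (Θ s) * Real.sin (Θ 0)) * hperp
        - (Real.cos (Θ s) * v 0 + Real.sin (Θ s) * v 1) * hpyth
    rw [← key, hB]
    simpa [PiLp.inner_apply, Fin.sum_univ_two, mul_comm] using this
  -- lower bound for B on [0,T]
  have hBlow : -(r * κ * T^2 / 2) ≤ B T := by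
    set g : ℝ → ℝ := fun s => B s + r * κ * s^2 / 2 with hg
    have hg' : ∀ s, HasDerivAt g (lam * Real.sin (Θ s - Θ 0) + r * κ * s) s := by
      intro s
      have h1 : HasDerivAt (fun s : ℝ => r * κ * s^2 / 2) (r * κ * s) s := by
        have := ((hasDerivAt_pow 2 s).const_mul (r * κ)).div_const 2
        simpa using this.congr_deriv (by ring)
      exact (hB' s).add h1
    have hmono : MonotoneOn g (Icc 0 T) := by
      apply monotoneOn_of_deriv_nonneg (convex_Icc 0 T)
      · exact fun s _ => ((hg' s).continuousAt).continuousWithinAt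
      · exact fun s _ => ((hg' s).differentiableAt).differentiableWithinAt
      · intro s hs
        rw [interior_Icc] at hs
        rw [(hg' s).deriv]
        have hb : |lam * Real.sin (Θ s - Θ 0)| ≤ r * (κ * s) := by
          rw [abs_mul, hlamabs]
          have : |Real.sin (Θ s - Θ 0)| ≤ κ * s := by
            calc |Real.sin (Θ s - Θ 0)| ≤ |Θ s - Θ 0| := Real.abs_sin_le_abs
            _ ≤ κ * |s| := hδ s
            _ = κ * s := by rw [abs_of_pos hs.1]
          exact mul_le_mul_of_nonneg_left this hr.le
        have := neg_abs_le (lam * Real.sin (Θ s - Θ 0))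
        nlinarith
    have hB0 : B 0 = 0 := by simp [hB]
    have := hmono (left_mem_Icc.mpr hT0.le) (right_mem_Icc.mpr hT0.le) hT0.le
    simp only [hg] at this
    rw [hB0] at this
    nlinarith
  -- lower bound for A on [0,T]
  have hAlow : T * Real.cos (κ * T) ≤ A T := by
    set h : ℝ → ℝ := fun s => A s - Real.cos (κ * T) * s with hh
    have hh' : ∀ s, HasDerivAt h (Real.cos (Θ s - Θ 0) - Real.cos (κ * T)) s := by
      intro s
      exact (hA' s).sub ((hasDerivAt_id s).const_mul (Real.cos (κ*T))|>.congr_deriv (by ring))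
    have hmono : MonotoneOn h (Icc 0 T) := by
      apply monotoneOn_of_deriv_nonneg (convex_Icc 0 T)
      · exact fun s _ => ((hh' s).continuousAt).continuousWithinAt
      · exact fun s _ => ((hh' s).differentiableAt).differentiableWithinAt
      · intro s hs
        rw [interior_Icc] at hs
        rw [(hh' s).deriv]
        have h1 : |Θ s - Θ 0| ≤ κ * T := hδT s ⟨hs.1.le, hs.2.le⟩
        have h2 : Real.cos (κ * T) ≤ Real.cos |Θ s - Θ 0| := by
          apply Real.cos_le_cos_of_nonneg_of_le_pi (abs_nonneg _) _ h1
          calc κ * T ≤ 1/2 := hxhalf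
          _ ≤ π := by linarith [Real.pi_gt_three]
        rw [Real.cos_abs] at h2
        linarith
    have hA0 : A 0 = 0 := by simp [hA]
    have := hmono (left_mem_Icc.mpr hT0.le) (right_mem_Icc.mpr hT0.le) hT0.le
    simp only [hh] at this
    rw [hA0] at this
    nlinarith
  -- final contradiction
  have hcosT : 1 - (κ*T)^2/2 ≤ Real.cos (κ * T) := Real.one_sub_sq_div_two_le_cos
  have hCS : A T ≤ ‖p T - p 0‖ := by
    have hnu : ‖uvec‖ = 1 := by
      have : ‖uvec‖^2 = 1 := by
        rw [← real_inner_self_eq_norm_sq, PiLp.inner_apply]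
        simp [hu, PiLp.inner_apply, Fin.sum_univ_two]
      nlinarith [norm_nonneg uvec]
    calc A T ≤ ‖p T - p 0‖ * ‖uvec‖ := real_inner_le_norm _ _
    _ = ‖p T - p 0‖ := by rw [hnu, mul_one]
  have hexpand : ‖p T - c‖^2 = ‖p T - p 0‖^2 + 2 * B T + r^2 := by
    have heq : p T - c = (p T - p 0) + v := by rw [hv]; abel
    rw [heq, norm_add_sq_real, htouch]
  have hle : ‖p T - c‖ ≤ r := hinside T hTε
  exact stmt3_arith r κ T (Real.cos (κ*T)) (A T) (B T) ‖p T - p 0‖ ‖p T - c‖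
    hr hκ hT0 hxsq hrκ hcosT hBlow hAlow hCS hexpand hle (norm_nonneg _) (norm_nonneg _)
end

section
/- Let p be a smooth closed convex path with curvature bound κ > 0, with turning angle Θ. Then for every t ∈ ℝ, the tangent line of p at p(t) supports the convex hull of the curve: for every x ∈ convexHull ℝ (range p), ⟨x − p(t), ν(t)⟩ ≥ 0, where ν(t) = (−sin Θ(t), cos Θ(t)) is the inward unit normal (Θ nondecreasing corresponds to counterclockwise orientation). -/
open Metric Set Real

theorem stmt10
    (κ : ℝ) (hκ : 0 < κ) (p : ℝ → EuclideanSpace ℝ (Fin 2))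
    (L : ℝ) (Θ : ℝ → ℝ) (hL : 0 < L)
    (hderiv : ∀ t, HasDerivAt p (!₂[Real.cos (Θ t), Real.sin (Θ t)]) t)
    (hmono : Monotone Θ) (hlip : LipschitzWith (Real.toNNReal κ) Θ)
    (hper : ∀ t, p (t + L) = p t)
    (hturn : ∀ t, Θ (t + L) = Θ t + 2 * Real.pi) :
    ∀ t : ℝ, ∀ x ∈ convexHull ℝ (Set.range p),
      (0 : ℝ) ≤ inner ℝ (x - p t)
        (!₂[-(Real.sin (Θ t)), Real.cos (Θ t)] : EuclideanSpace ℝ (Fin 2)) := by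
  intro t x hx
  set ν : EuclideanSpace ℝ (Fin 2) := !₂[-(Real.sin (Θ t)), Real.cos (Θ t)] with hν
  set f : ℝ → ℝ := fun s => inner ℝ (p s - p t) ν with hf
  -- derivative of f
  have hf' : ∀ s, HasDerivAt f (Real.sin (Θ s - Θ t)) s := by
    intro s
    have h1 : HasDerivAt (fun s => p s - p t)
        (!₂[Real.cos (Θ s), Real.sin (Θ s)]) s := (hderiv s).sub_const _
    have h2 := h1.inner ℝ (hasDerivAt_const s ν)
    refine (h2.congr_deriv ?_ : HasDerivAt f _ s)
    simp only [inner_zero_right, zero_add, add_zero, hν, PiLp.inner_apply,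
      Fin.sum_univ_two, RCLike.inner_apply, conj_trivial, Real.sin_sub,
      Matrix.cons_val_zero, Matrix.cons_val_one, Matrix.head_cons, PiLp.toLp_apply]
    ring
  have hfc : Continuous f := by
    rw [continuous_iff_continuousAt]; exact fun s => (hf' s).continuousAt
  have hft : f t = 0 := by simp [hf]
  have hftL : f (t + L) = 0 := by simp [hf, hper t]
  -- key: f nonneg on [t, t+L]
  have hΘc : Continuous Θ := hlip.continuous
  obtain ⟨c, hc, hΘc'⟩ : ∃ c ∈ Icc t (t + L), Θ c = Θ t + π := by
    have := intermediate_value_Icc (le_of_lt (by linarith)) hΘc.continuousOn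
      (a := t) (b := t + L)
    apply this
    rw [hturn t]
    constructor
    · linarith [Real.pi_pos]
    · linarith [Real.pi_pos]
  have hmonoOn : MonotoneOn f (Icc t c) := by
    apply monotoneOn_of_hasDerivWithinAt_nonneg (convex_Icc t c) hfc.continuousOn
      (f' := fun s => Real.sin (Θ s - Θ t))
      (fun s hs => (hf' s).hasDerivWithinAt)
    intro s hs
    rw [interior_Icc] at hs
    have h1 : Θ t ≤ Θ s := hmono hs.1.le
    have h2 : Θ s ≤ Θ t + π := hΘc' ▸ hmono hs.2.le
    exact Real.sin_nonneg_of_nonneg_of_le_pi (by linarith) (by linarith)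
  have hantiOn : AntitoneOn f (Icc c (t + L)) := by
    apply antitoneOn_of_hasDerivWithinAt_nonpos (convex_Icc c (t + L)) hfc.continuousOn
      (f' := fun s => Real.sin (Θ s - Θ t))
      (fun s hs => (hf' s).hasDerivWithinAt)
    intro s hs
    rw [interior_Icc] at hs
    have h1 : Θ t + π ≤ Θ s := hΘc' ▸ hmono hs.1.le
    have h2 : Θ s ≤ Θ t + 2 * π := (hturn t) ▸ hmono hs.2.le
    have : Real.sin (Θ s - Θ t - π) = -Real.sin (Θ s - Θ t) := Real.sin_sub_pi _
    nlinarith [Real.sin_nonneg_of_nonneg_of_le_pi (x := Θ s - Θ t - π)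
      (by linarith) (by linarith)]
  have hkey : ∀ s ∈ Icc t (t + L), 0 ≤ f s := by
    intro s hs
    rcases le_total s c with h | h
    · calc (0:ℝ) = f t := hft.symm
        _ ≤ f s := hmonoOn ⟨le_refl t, hc.1⟩ ⟨hs.1, h⟩ hs.1
    · calc (0:ℝ) = f (t + L) := hftL.symm
        _ ≤ f s := hantiOn ⟨h, hs.2⟩ ⟨hc.2, le_refl _⟩ hs.2
  -- f nonneg everywhere by periodicity
  have hperf : Function.Periodic p L := hper
  have hall : ∀ s, 0 ≤ f s := by
    intro s
    obtain ⟨n, hn, -⟩ := existsUnique_add_zsmul_mem_Ico hL s t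
    have hps : p (s + n • L) = p s := by
      have := (hperf.int_mul n) s
      rwa [zsmul_eq_mul]
    have hfs : f (s + n • L) = f s := by simp only [hf]; rw [hps]
    rw [← hfs]
    exact hkey _ ⟨hn.1, hn.2.le⟩
  -- convex hull step
  have hconv : Convex ℝ {y : EuclideanSpace ℝ (Fin 2) | (0:ℝ) ≤ inner ℝ (y - p t) ν} := by
    intro a ha b hb μa μb hμa hμb hμab
    simp only [mem_setOf_eq] at ha hb ⊢
    have hpt : μa • p t + μb • p t = p t := by rw [← add_smul, hμab, one_smul]
    have hexp : μa • a + μb • b - p t = μa • (a - p t) + μb • (b - p t) := by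
      rw [smul_sub, smul_sub,
        show μa • a - μa • p t + (μb • b - μb • p t)
          = μa • a + μb • b - (μa • p t + μb • p t) from by abel, hpt]
    rw [hexp, inner_add_left, real_inner_smul_left, real_inner_smul_left]
    have := mul_nonneg hμa ha
    have := mul_nonneg hμb hb
    linarith
  have hsub : Set.range p ⊆ {y : EuclideanSpace ℝ (Fin 2) | (0:ℝ) ≤ inner ℝ (y - p t) ν} := by
    rintro _ ⟨s, rfl⟩
    exact hall s
  exact convexHull_min hsub hconv hx
end

section
/- Let E ⊆ ℝ² be a convex polygon and let v be a point in the interior of E. Define r_v = sup{r > 0 : ∃ c ∈ ℝ², v ∈ closedBall c r and closedBall c r ⊆ E} and r* = sup{r > 0 : ∃ c ∈ ℝ², closedBall c r ⊆ E} (the inradius of E). If r_v < r*, then v admits a critical circle: there exist c ∈ ℝ² with ‖v − c‖ = r_v and closedBall c r_v ⊆ E, and points p₁, p₂ on the frontier of E with ‖p₁ − c‖ = ‖p₂ − c‖ = r_v, such that v − c = a·(p₁ − c) + b·(p₂ − c) for some reals a, b ≥ 0 (i.e., v lies on an arc of the circle of radius r_v about c with endpoints p₁, p₂ that is not greater than a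 semicircle). -/
open Metric Set Real



/-- A smooth closed convex path with curvature bound `κ`: a `C¹` unit-speed map
`p : ℝ → ℝ²` whose tangent angle `Θ` is nondecreasing, `κ`-Lipschitz (average
curvature at most `κ`), with `p` periodic of period `L` and `Θ` increasing by `2π`
over a period. -/
def IsSmoothClosedConvexPath (κ : ℝ) (p : ℝ → EuclideanSpace ℝ (Fin 2)) : Prop :=
  ∃ (L : ℝ) (Θ : ℝ → ℝ), 0 < L ∧
    (∀ t, HasDerivAt p (WithLp.toLp 2 ![Real.cos (Θ t), Real.sin (Θ t)]) t) ∧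
    Monotone Θ ∧ LipschitzWith (Real.toNNReal κ) Θ ∧
    (∀ t, p (t + L) = p t) ∧
    (∀ t, Θ (t + L) = Θ t + 2 * Real.pi)

/-- `p` is a tour of `X` in `E`. -/
def IsTour (p : ℝ → EuclideanSpace ℝ (Fin 2)) (X E : Set (EuclideanSpace ℝ (Fin 2))) : Prop :=
  Set.range p ⊆ E ∧ X ⊆ convexHull ℝ (Set.range p)

/-- A convex polygon: the convex hull of finitely many points, with nonempty interior. -/
def IsConvexPolygon (E : Set (EuclideanSpace ℝ (Fin 2))) : Prop :=
  (∃ S : Finset (EuclideanSpace ℝ (Fin 2)), E = convexHull ℝ (S : Set (EuclideanSpace ℝ (Fin 2)))) ∧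
    (interior E).Nonempty

/-- `NBall ρ E`: the union of all closed balls of radius `ρ` contained in `E`. -/
def NBall (ρ : ℝ) (E : Set (EuclideanSpace ℝ (Fin 2))) : Set (EuclideanSpace ℝ (Fin 2)) :=
  {x | ∃ c, Metric.closedBall c ρ ⊆ E ∧ x ∈ Metric.closedBall c ρ}

section AuxiliaryLemmas

open RealInnerProductSpace

set_option maxHeartbeats 1000000


lemma aux_ball_combo {E : Set (EuclideanSpace ℝ (Fin 2))} (hconv : Convex ℝ E)
    {c₁ c₂ : EuclideanSpace ℝ (Fin 2)} {r₁ r₂ t : ℝ}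
    (h1 : 0 ≤ r₁) (h2 : 0 ≤ r₂) (hb1 : closedBall c₁ r₁ ⊆ E) (hb2 : closedBall c₂ r₂ ⊆ E)
    (ht0 : 0 ≤ t) (ht1 : t ≤ 1) :
    closedBall ((1-t) • c₁ + t • c₂) ((1-t)*r₁ + t*r₂) ⊆ E := by
  intro x hx
  have hc₁E : c₁ ∈ E := hb1 (mem_closedBall_self h1)
  have hc₂E : c₂ ∈ E := hb2 (mem_closedBall_self h2)
  set ρ := (1-t)*r₁ + t*r₂ with hρdef
  have ht0' : 0 ≤ 1 - t := by linarith
  have hρ0 : 0 ≤ ρ := by positivity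
  have hd : ‖x - ((1-t) • c₁ + t • c₂)‖ ≤ ρ := by
    rw [mem_closedBall, dist_eq_norm] at hx; exact hx
  rcases eq_or_lt_of_le hρ0 with hρz | hρpos
  · have hx0 : x = (1-t) • c₁ + t • c₂ := by
      have : ‖x - ((1-t) • c₁ + t • c₂)‖ = 0 := le_antisymm (by rw [← hρz] at hd; exact hd) (norm_nonneg _)
      exact sub_eq_zero.mp (norm_eq_zero.mp this)
    rw [hx0]
    exact hconv hc₁E hc₂E ht0' ht0 (by ring)
  · set d := x - ((1-t) • c₁ + t • c₂) with hddef
    have h1' : c₁ + (r₁/ρ) • d ∈ E := by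
      apply hb1
      rw [mem_closedBall, dist_eq_norm]
      have : ‖c₁ + (r₁/ρ) • d - c₁‖ = (r₁/ρ) * ‖d‖ := by
        rw [add_sub_cancel_left, norm_smul, Real.norm_eq_abs, abs_of_nonneg (by positivity)]
      rw [this]
      calc (r₁/ρ) * ‖d‖ ≤ (r₁/ρ) * ρ := by
            apply mul_le_mul_of_nonneg_left hd (by positivity)
        _ = r₁ := by field_simp
    have h2' : c₂ + (r₂/ρ) • d ∈ E := by
      apply hb2
      rw [mem_closedBall, dist_eq_norm]
      have : ‖c₂ + (r₂/ρ) • d - c₂‖ = (r₂/ρ) * ‖d‖ := by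
        rw [add_sub_cancel_left, norm_smul, Real.norm_eq_abs, abs_of_nonneg (by positivity)]
      rw [this]
      calc (r₂/ρ) * ‖d‖ ≤ (r₂/ρ) * ρ := by
            apply mul_le_mul_of_nonneg_left hd (by positivity)
        _ = r₂ := by field_simp
    have hxeq : x = (1-t) • (c₁ + (r₁/ρ) • d) + t • (c₂ + (r₂/ρ) • d) := by
      have hcoef : (1-t) * (r₁/ρ) + t * (r₂/ρ) = 1 := by
        field_simp
        linarith
      have hx' : x = ((1-t) • c₁ + t • c₂) + d := by rw [hddef]; abel
      rw [hx']
      have : (1-t) • (c₁ + (r₁/ρ) • d) + t • (c₂ + (r₂/ρ) • d)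
          = ((1-t) • c₁ + t • c₂) + ((1-t) * (r₁/ρ) + t * (r₂/ρ)) • d := by
        module
      rw [this, hcoef, one_smul]
    rw [hxeq]
    exact hconv h1' h2' ht0' ht0 (by ring)


noncomputable def auxJ (u : EuclideanSpace ℝ (Fin 2)) : EuclideanSpace ℝ (Fin 2) :=
  (WithLp.equiv 2 (Fin 2 → ℝ)).symm ![-(u 1), u 0]

lemma aux_identity (u x : EuclideanSpace ℝ (Fin 2)) :
    ⟪u,x⟫^2 + ⟪auxJ u, x⟫^2 = ⟪u,u⟫ * ⟪x,x⟫ := by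
  simp [auxJ, PiLp.inner_apply, Fin.sum_univ_two, RCLike.inner_apply, conj_trivial,
    EuclideanSpace.norm_eq]
  rw [Real.sq_sqrt (by positivity), Real.sq_sqrt (by positivity)]
  ring

lemma aux_J_orth (u : EuclideanSpace ℝ (Fin 2)) : ⟪auxJ u, u⟫ = 0 := by
  simp [auxJ, PiLp.inner_apply, Fin.sum_univ_two, RCLike.inner_apply, conj_trivial]
  ring

lemma aux_alg {R f₁ g₁ fp gp : ℝ} (h₁ : 0 < f₁) (hp : 0 ≤ fp)
    (hc₁ : f₁^2 + g₁^2 = R) (hcp : fp^2 + gp^2 = R) (hle : gp ≤ g₁) :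
    f₁ * gp ≤ g₁ * fp := by
  rcases le_or_gt 0 g₁ with hg₁ | hg₁
  · rcases le_or_gt gp 0 with hgp | hgp
    · exact le_trans (mul_nonpos_of_nonneg_of_nonpos h₁.le hgp) (mul_nonneg hg₁ hp)
    · have h2 : gp^2 ≤ g₁^2 := by nlinarith
      have h3 : f₁^2 ≤ fp^2 := by nlinarith
      have h4 : f₁ ≤ fp := by nlinarith
      nlinarith
  · have hgp : gp < 0 := lt_of_le_of_lt hle hg₁
    have h2 : g₁^2 ≤ gp^2 := by nlinarith
    have h3 : fp^2 ≤ f₁^2 := by nlinarith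
    have h4 : fp ≤ f₁ := by nlinarith
    nlinarith

lemma aux_key {T : Set (EuclideanSpace ℝ (Fin 2))} {c u : EuclideanSpace ℝ (Fin 2)} {rv : ℝ}
    (hrv : 0 < rv) (hTcomp : IsCompact T) (hTne : T.Nonempty)
    (hsph : ∀ p ∈ T, ⟪p - c, p - c⟫ = rv^2)
    (huu : ⟪u, u⟫ = rv^2)
    (hH : ∀ w : EuclideanSpace ℝ (Fin 2), (∀ p ∈ T, ⟪w, p - c⟫ ≤ 0) → ⟪w, u⟫ ≤ 0) :
    ∃ p₁ ∈ T, ∃ p₂ ∈ T, ∃ a b : ℝ, 0 ≤ a ∧ 0 ≤ b ∧ u = a • (p₁ - c) + b • (p₂ - c) := by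
  classical
  set g : EuclideanSpace ℝ (Fin 2) → ℝ := fun p => ⟪u, p - c⟫ with hgdef
  set f : EuclideanSpace ℝ (Fin 2) → ℝ := fun p => ⟪auxJ u, p - c⟫ with hfdef
  have hgcont : Continuous g := by
    apply Continuous.inner continuous_const (continuous_id.sub continuous_const)
  have hfcont : Continuous f := by
    apply Continuous.inner continuous_const (continuous_id.sub continuous_const)
  have hcirc : ∀ p ∈ T, f p ^ 2 + g p ^ 2 = (rv^2)^2 := by
    intro p hp
    have := aux_identity u (p - c)
    rw [hsph p hp, huu] at this
    simp only [hfdef, hgdef]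
    linarith [this]
  have hgub : ∀ p ∈ T, g p ≤ rv^2 := by
    intro p hp
    have h1 : g p ≤ ‖u‖ * ‖p - c‖ := real_inner_le_norm u (p - c)
    have h2 : ‖u‖^2 = rv^2 := by rw [← real_inner_self_eq_norm_sq]; exact huu
    have h3 : ‖p - c‖^2 = rv^2 := by rw [← real_inner_self_eq_norm_sq]; exact hsph p hp
    have h4 : ‖u‖ = rv := by nlinarith [norm_nonneg u]
    have h5 : ‖p - c‖ = rv := by nlinarith [norm_nonneg (p - c)]
    rw [h4, h5] at h1; nlinarith
  have hglb : ∀ p ∈ T, -(rv^2) ≤ g p := by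
    intro p hp
    have h1 : |g p| ≤ ‖u‖ * ‖p - c‖ := abs_real_inner_le_norm u (p - c)
    have h2 : ‖u‖^2 = rv^2 := by rw [← real_inner_self_eq_norm_sq]; exact huu
    have h3 : ‖p - c‖^2 = rv^2 := by rw [← real_inner_self_eq_norm_sq]; exact hsph p hp
    have h4 : ‖u‖ = rv := by nlinarith [norm_nonneg u]
    have h5 : ‖p - c‖ = rv := by nlinarith [norm_nonneg (p - c)]
    rw [h4, h5] at h1
    have := neg_abs_le (g p)
    nlinarith
  -- helper to produce the pair solution
  have hsolve : ∀ p₁ ∈ T, ∀ p₂ ∈ T, ∀ a b : ℝ,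
      a * f p₁ + b * f p₂ = 0 → a * g p₁ + b * g p₂ = rv^2 →
      u = a • (p₁ - c) + b • (p₂ - c) := by
    intro p₁ hp₁ p₂ hp₂ a b he1 he2
    set x := a • (p₁ - c) + b • (p₂ - c) - u with hxdef
    have hgx : ⟪u, x⟫ = 0 := by
      have h1 : ⟪u, x⟫ = a * ⟪u, p₁ - c⟫ + b * ⟪u, p₂ - c⟫ - ⟪u, u⟫ := by
        rw [hxdef, inner_sub_right, inner_add_right, real_inner_smul_right, real_inner_smul_right]
      simp only [hgdef] at he2
      rw [h1, huu]; linarith [he2]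
    have hfx : ⟪auxJ u, x⟫ = 0 := by
      have h1 : ⟪auxJ u, x⟫ = a * ⟪auxJ u, p₁ - c⟫ + b * ⟪auxJ u, p₂ - c⟫ - ⟪auxJ u, u⟫ := by
        rw [hxdef, inner_sub_right, inner_add_right, real_inner_smul_right, real_inner_smul_right]
      simp only [hfdef] at he1
      rw [h1, aux_J_orth]; linarith [he1]
    have hxx : ⟪u,u⟫ * ⟪x,x⟫ = 0 := by rw [← aux_identity, hgx, hfx]; ring
    have : ⟪x,x⟫ = (0:ℝ) := by
      rcases mul_eq_zero.mp hxx with h | h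
      · exfalso; rw [huu] at h; nlinarith
      · exact h
    have hx0 : x = 0 := inner_self_eq_zero.mp this
    rw [hxdef] at hx0
    have := sub_eq_zero.mp hx0
    exact this.symm
  by_cases hcase1 : ∃ p ∈ T, g p = rv^2
  · obtain ⟨p, hp, hgp⟩ := hcase1
    refine ⟨p, hp, p, hp, 1, 0, zero_le_one, le_refl 0, ?_⟩
    apply hsolve p hp p hp 1 0
    · have hc := hcirc p hp
      have hf0 : f p ^ 2 = 0 := by nlinarith
      have : f p = 0 := by nlinarith
      rw [this]; ring
    · rw [hgp]; ring
  · push_neg at hcase1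
    have hglt : ∀ p ∈ T, g p < rv^2 := fun p hp => lt_of_le_of_ne (hgub p hp) (hcase1 p hp)
    by_cases hfpos : ∃ p ∈ T, 0 < f p
    · -- maximize g over {p ∈ T | 0 ≤ f p}
      set K := T ∩ {p | 0 ≤ f p} with hKdef
      have hKcomp : IsCompact K := hTcomp.inter_right (isClosed_le continuous_const hfcont)
      have hKne : K.Nonempty := by
        obtain ⟨p, hp, hfp⟩ := hfpos
        exact ⟨p, hp, hfp.le⟩
      obtain ⟨p₁, hp₁K, hp₁max⟩ := hKcomp.exists_isMaxOn hKne hgcont.continuousOn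
      have hp₁T : p₁ ∈ T := hp₁K.1
      have hf₁nn : 0 ≤ f p₁ := hp₁K.2
      have hf₁ : 0 < f p₁ := by
        rcases eq_or_lt_of_le hf₁nn with h0 | h; swap; · exact h
        exfalso
        have hc := hcirc p₁ hp₁T
        have : g p₁ ^2 = (rv^2)^2 := by nlinarith
        have hgp₁ : g p₁ = -(rv^2) := by
          have := hglt p₁ hp₁T
          nlinarith
        obtain ⟨q, hq, hfq⟩ := hfpos
        have hqK : q ∈ K := ⟨hq, hfq.le⟩
        have h1 : g q ≤ g p₁ := hp₁max hqK
        have h2 : -(rv^2) ≤ g q := hglb q hq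
        have hgq : g q = -(rv^2) := by linarith
        have hcq := hcirc q hq
        have : f q ^ 2 = 0 := by nlinarith
        nlinarith
      by_cases hpair : ∃ p ∈ T, f p < 0 ∧ 0 < f p₁ * g p - f p * g p₁
      · obtain ⟨p₂, hp₂, hf₂, hD⟩ := hpair
        set D := f p₁ * g p₂ - f p₂ * g p₁ with hDdef
        have hD0 : 0 < D := hD
        refine ⟨p₁, hp₁T, p₂, hp₂, rv^2 * (-(f p₂)) / D, rv^2 * f p₁ / D, ?_, ?_, ?_⟩
        · apply div_nonneg (mul_nonneg (by positivity) (by linarith)) hD0.le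
        · apply div_nonneg (mul_nonneg (by positivity) hf₁.le) hD0.le
        · apply hsolve p₁ hp₁T p₂ hp₂
          · field_simp; ring
          · field_simp; ring
      · push_neg at hpair
        exfalso
        have hwp : ∀ p ∈ T, ⟪f p₁ • u - g p₁ • auxJ u, p - c⟫ ≤ 0 := by
          intro p hp
          have hexp : ⟪f p₁ • u - g p₁ • auxJ u, p - c⟫ = f p₁ * g p - g p₁ * f p := by
            rw [inner_sub_left, real_inner_smul_left, real_inner_smul_left]
          rw [hexp]
          rcases le_or_gt 0 (f p) with hfp | hfp
          · have := aux_alg hf₁ hfp (hcirc p₁ hp₁T) (hcirc p hp) (hp₁max ⟨hp, hfp⟩)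
            linarith
          · have := hpair p hp hfp
            linarith
        have := hH _ hwp
        have hwu : ⟪f p₁ • u - g p₁ • auxJ u, u⟫ = f p₁ * rv^2 := by
          rw [inner_sub_left, real_inner_smul_left, real_inner_smul_left, aux_J_orth, huu]; ring
        rw [hwu] at this
        nlinarith [mul_pos hf₁ (pow_pos hrv 2)]
    · push_neg at hfpos
      obtain ⟨p₂, hp₂T, hp₂max⟩ := hTcomp.exists_isMaxOn hTne hgcont.continuousOn
      by_cases hf₂0 : f p₂ = 0
      · exfalso
        have hc := hcirc p₂ hp₂T
        have hgp₂ : g p₂ = -(rv^2) := by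
          have := hglt p₂ hp₂T
          nlinarith
        have hwp : ∀ p ∈ T, ⟪u, p - c⟫ ≤ 0 := by
          intro p hp
          have h1 : g p ≤ g p₂ := hp₂max hp
          show g p ≤ 0
          nlinarith
        have := hH u hwp
        rw [huu] at this
        nlinarith
      · exfalso
        have hf₂ : f p₂ < 0 := lt_of_le_of_ne (hfpos p₂ hp₂T) hf₂0
        have hwp : ∀ p ∈ T, ⟪(-(f p₂)) • u + g p₂ • auxJ u, p - c⟫ ≤ 0 := by
          intro p hp
          have hexp : ⟪(-(f p₂)) • u + g p₂ • auxJ u, p - c⟫ = (-(f p₂)) * g p + g p₂ * f p := by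
            rw [inner_add_left, real_inner_smul_left, real_inner_smul_left]
          rw [hexp]
          have hc₂ : (-(f p₂))^2 + g p₂ ^2 = (rv^2)^2 := by
            have := hcirc p₂ hp₂T; nlinarith
          have hcp : (-(f p))^2 + g p ^2 = (rv^2)^2 := by
            have := hcirc p hp; nlinarith
          have := aux_alg (by linarith : (0:ℝ) < -(f p₂)) (by linarith [hfpos p hp] : (0:ℝ) ≤ -(f p))
            hc₂ hcp (hp₂max hp)
          linarith
        have := hH _ hwp
        have hwu : ⟪(-(f p₂)) • u + g p₂ • auxJ u, u⟫ = (-(f p₂)) * rv^2 := by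
          rw [inner_add_left, real_inner_smul_left, real_inner_smul_left, aux_J_orth, huu]; ring
        rw [hwu] at this
        nlinarith [mul_pos (by linarith : (0:ℝ) < -(f p₂)) (pow_pos hrv 2)]

end AuxiliaryLemmas

open RealInnerProductSpace in
set_option maxHeartbeats 1000000 in
theorem stmt11
    (E : Set (EuclideanSpace ℝ (Fin 2))) (hE : IsConvexPolygon E)
    (v : EuclideanSpace ℝ (Fin 2)) (hv : v ∈ interior E)
    (rv rstar : ℝ)
    (hrv : rv = sSup {r : ℝ | 0 < r ∧ ∃ c : EuclideanSpace ℝ (Fin 2),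
      v ∈ Metric.closedBall c r ∧ Metric.closedBall c r ⊆ E})
    (hrstar : rstar = sSup {r : ℝ | 0 < r ∧ ∃ c : EuclideanSpace ℝ (Fin 2),
      Metric.closedBall c r ⊆ E})
    (hlt : rv < rstar) :
    ∃ (c p₁ p₂ : EuclideanSpace ℝ (Fin 2)) (a b : ℝ),
      ‖v - c‖ = rv ∧ Metric.closedBall c rv ⊆ E ∧
      p₁ ∈ frontier E ∧ p₂ ∈ frontier E ∧
      ‖p₁ - c‖ = rv ∧ ‖p₂ - c‖ = rv ∧
      0 ≤ a ∧ 0 ≤ b ∧ v - c = a • (p₁ - c) + b • (p₂ - c) := by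
  classical
  obtain ⟨⟨S, hSE⟩, hEint⟩ := hE
  have hEconv : Convex ℝ E := hSE ▸ convex_convexHull ℝ _
  have hEcomp : IsCompact E := hSE ▸ (S : Set (EuclideanSpace ℝ (Fin 2))).toFinite.isCompact_convexHull (𝕜 := ℝ)
  have hEclosed : IsClosed E := hEcomp.isClosed
  obtain ⟨R, hR⟩ : ∃ R : ℝ, E ⊆ closedBall 0 R := hEcomp.isBounded.subset_closedBall 0
  have hvE : v ∈ E := interior_subset hv
  have hR0 : 0 ≤ R := by
    have := hR hvE
    rw [mem_closedBall] at this
    linarith [dist_nonneg (x := v) (y := (0 : EuclideanSpace ℝ (Fin 2)))]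
  set Av := {r : ℝ | 0 < r ∧ ∃ c : EuclideanSpace ℝ (Fin 2),
      v ∈ Metric.closedBall c r ∧ Metric.closedBall c r ⊆ E} with hAvdef
  set As := {r : ℝ | 0 < r ∧ ∃ c : EuclideanSpace ℝ (Fin 2),
      Metric.closedBall c r ⊆ E} with hAsdef
  -- nonemptiness of Av
  have hAvne : Av.Nonempty := by
    obtain ⟨ε, hε0, hεsub⟩ := Metric.isOpen_iff.mp isOpen_interior v hv
    refine ⟨ε/2, by linarith, v, mem_closedBall_self (by linarith), ?_⟩
    intro x hx
    apply interior_subset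
    apply hεsub
    rw [mem_closedBall] at hx
    rw [mem_ball]
    linarith
  -- upper bound
  have hub : ∀ r ∈ As, r ≤ 2*R := by
    rintro r ⟨hr0, c, hc⟩
    have hcE : c ∈ E := hc (mem_closedBall_self hr0.le)
    set e : EuclideanSpace ℝ (Fin 2) := EuclideanSpace.single (0 : Fin 2) (1:ℝ) with hedef
    have he : ‖e‖ = 1 := by rw [hedef, EuclideanSpace.norm_single]; simp
    have h2 : c + r • e ∈ E := by
      apply hc
      rw [mem_closedBall, dist_eq_norm, add_sub_cancel_left, norm_smul, he, Real.norm_eq_abs,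
        abs_of_nonneg hr0.le, mul_one]
    have hb1 : ‖c‖ ≤ R := by have := hR hcE; rwa [mem_closedBall_zero_iff] at this
    have hb2 : ‖c + r • e‖ ≤ R := by have := hR h2; rwa [mem_closedBall_zero_iff] at this
    have : ‖(c + r • e) - c‖ = r := by
      rw [add_sub_cancel_left, norm_smul, he, Real.norm_eq_abs, abs_of_nonneg hr0.le, mul_one]
    have := norm_sub_le (c + r • e) c
    linarith
  have hAvsub : Av ⊆ As := fun r hr => ⟨hr.1, hr.2.choose, hr.2.choose_spec.2⟩
  have hAvbdd : BddAbove Av := ⟨2*R, fun r hr => hub r (hAvsub hr)⟩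
  have hAsbdd : BddAbove As := ⟨2*R, fun r hr => hub r hr⟩
  have hAsne : As.Nonempty := hAvne.mono hAvsub
  have hrv0 : 0 < rv := by
    obtain ⟨r, hr⟩ := hAvne
    have := le_csSup hAvbdd hr
    rw [← hrv] at this
    exact lt_of_lt_of_le hr.1 this
  obtain ⟨r', hr'As, hrvr'⟩ : ∃ r' ∈ As, rv < r' := by
    rw [hrstar] at hlt
    exact exists_lt_of_lt_csSup hAsne hlt
  obtain ⟨hr'pos, cs, hcs⟩ := hr'As
  set K := {c : EuclideanSpace ℝ (Fin 2) | closedBall c rv ⊆ E} with hKdef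
  have hcsK : cs ∈ K := fun x hx => hcs (closedBall_subset_closedBall hrvr'.le hx)
  have hKE : K ⊆ E := fun c hc => hc (mem_closedBall_self hrv0.le)
  have hKconv : Convex ℝ K := by
    intro c₁ hc₁ c₂ hc₂ a b ha hb hab
    have h1 : a = 1 - b := by linarith
    have := aux_ball_combo hEconv hrv0.le hrv0.le hc₁ hc₂ hb (by linarith)
    have h2 : (1-b)*rv + b*rv = rv := by ring
    rw [h2] at this
    rw [hKdef]
    simpa [h1] using this
  have hKclosed : IsClosed K := by
    have hKeq : K = ⋂ (x ∈ closedBall (0 : EuclideanSpace ℝ (Fin 2)) rv), (fun c => c + x) ⁻¹' E := by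
      ext c
      simp only [hKdef, mem_setOf_eq, mem_iInter, mem_preimage]
      constructor
      · intro h x hx
        apply h
        rw [mem_closedBall_zero_iff] at hx
        rw [mem_closedBall, dist_eq_norm, add_sub_cancel_left]
        exact hx
      · intro h y hy
        have : y = c + (y - c) := by abel
        rw [this]
        apply h
        rw [mem_closedBall_zero_iff]
        rw [mem_closedBall, dist_eq_norm] at hy
        exact hy
    rw [hKeq]
    exact isClosed_biInter fun x hx => hEclosed.preimage (continuous_id.add continuous_const)
  have hKcomp : IsCompact K := hEcomp.of_isClosed_subset hKclosed hKE
  -- lower bound on distance to K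
  have hKfar : ∀ c ∈ K, rv ≤ dist v c := by
    intro c hc
    by_contra h
    push_neg at h
    set t := min 1 ((rv - dist v c)/(‖cs - c‖ + 1)) with htdef
    have ht0 : 0 < t := lt_min one_pos (div_pos (by linarith) (by positivity))
    have ht1 : t ≤ 1 := min_le_left _ _
    have hsub := aux_ball_combo hEconv hrv0.le hr'pos.le hc hcs ht0.le ht1
    have htb : t * (‖cs - c‖ + 1) ≤ rv - dist v c := by
      have h1 : t ≤ (rv - dist v c)/(‖cs - c‖ + 1) := min_le_right _ _
      rw [le_div_iff₀ (by positivity)] at h1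
      linarith
    have hv' : v ∈ closedBall ((1-t) • c + t • cs) ((1-t)*rv + t*r') := by
      rw [mem_closedBall]
      have hcen : (1-t) • c + t • cs = c + t • (cs - c) := by module
      rw [hcen]
      have hd1 : dist v (c + t • (cs - c)) ≤ dist v c + t * ‖cs - c‖ := by
        have h0 : dist c (c + t • (cs - c)) = t * ‖cs - c‖ := by
          rw [dist_self_add_right, norm_smul, Real.norm_eq_abs, abs_of_nonneg ht0.le]
        have := dist_triangle v c (c + t • (cs - c))
        linarith
      have ht2 : t * ‖cs - c‖ ≤ rv - dist v c := by nlinarith [norm_nonneg (cs - c)]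
      nlinarith [hrvr', ht0]
    have hmem : (1-t)*rv + t*r' ∈ Av := ⟨by nlinarith, _, hv', hsub⟩
    have hle := le_csSup hAvbdd hmem
    rw [← hrv] at hle
    nlinarith
  -- the nearest point c of K
  obtain ⟨c, hcK, hcmin'⟩ := hKcomp.exists_isMinOn ⟨cs, hcsK⟩
    ((continuous_const.dist continuous_id).continuousOn : ContinuousOn (fun c => dist v c) K)
  have hcmin : ∀ c' ∈ K, dist v c ≤ dist v c' := fun c' hc' => hcmin' hc'
  have hball : closedBall c rv ⊆ E := hcK
  have hcv : dist v c = rv := by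
    refine le_antisymm ?_ (hKfar c hcK)
    by_contra h
    push_neg at h
    set d := dist v c with hddef
    set M := 2*R + 1 with hMdef
    have hM0 : (0:ℝ) < M := by linarith
    have hMd : ∀ x ∈ E, ∀ y ∈ E, ‖x - y‖ ≤ M := by
      intro x hx y hy
      have h1 : ‖x‖ ≤ R := by have := hR hx; rwa [mem_closedBall_zero_iff] at this
      have h2 : ‖y‖ ≤ R := by have := hR hy; rwa [mem_closedBall_zero_iff] at this
      have := norm_sub_le x y
      linarith
    set δ := min rv ((d - rv)*(r'-rv)/M) with hδdef
    have hδ0 : 0 < δ := lt_min hrv0 (by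
      apply div_pos
      apply mul_pos (by linarith) (by linarith)
      exact hM0)
    obtain ⟨r, hrAv, hrlb⟩ : ∃ r ∈ Av, rv - δ < r := by
      apply exists_lt_of_lt_csSup hAvne
      rw [← hrv]; linarith
    have hrub : r ≤ rv := by rw [hrv]; exact le_csSup hAvbdd hrAv
    obtain ⟨hrpos, cr, hvcr, hcrE⟩ := hrAv
    have hcrE' : cr ∈ E := hcrE (mem_closedBall_self hrpos.le)
    have hcsE : cs ∈ E := hcs (mem_closedBall_self hr'pos.le)
    rcases le_or_gt rv r with hcase | hcase
    · have hcrK : cr ∈ K := fun x hx => hcrE (closedBall_subset_closedBall hcase hx)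
      have h1 := hcmin cr hcrK
      have h2 : dist v cr ≤ r := mem_closedBall.mp hvcr
      linarith
    · set t := (rv - r)/(r' - r) with htdef
      have hrr' : r < r' := lt_trans hcase hrvr'
      have htpos : 0 < t := div_pos (by linarith) (by linarith)
      have ht1 : t ≤ 1 := by
        rw [div_le_one (by linarith)]
        linarith
      have hsub := aux_ball_combo hEconv hrpos.le hr'pos.le hcrE hcs htpos.le ht1
      have hrad : (1-t)*r + t*r' = rv := by
        have hc0 : t * (r' - r) = rv - r := by
          rw [htdef]
          exact div_mul_cancel₀ _ (ne_of_gt (by linarith))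
        linear_combination hc0
      rw [hrad] at hsub
      have hc''K : (1-t) • cr + t • cs ∈ K := hsub
      have hd1 : dist v ((1-t) • cr + t • cs) ≤ r + t * M := by
        have hcen : (1-t) • cr + t • cs = cr + t • (cs - cr) := by module
        rw [hcen]
        calc dist v (cr + t • (cs - cr)) ≤ dist v cr + dist cr (cr + t • (cs - cr)) := dist_triangle _ _ _
          _ ≤ r + t * M := by
              have h3 : dist cr (cr + t • (cs - cr)) = t * ‖cs - cr‖ := by
                rw [dist_self_add_right, norm_smul, Real.norm_eq_abs, abs_of_nonneg htpos.le]
              have h4 : ‖cs - cr‖ ≤ M := hMd cs hcsE cr hcrE'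
              have h5 : dist v cr ≤ r := mem_closedBall.mp hvcr
              nlinarith
      have htM : t * M < d - rv := by
        have h6 : t ≤ (rv - r)/(r' - rv) := by
          apply div_le_div_of_nonneg_left (by linarith) (by linarith) (by linarith)
        have h7 : rv - r < δ := by linarith
        have h8 : δ ≤ (d - rv)*(r'-rv)/M := min_le_right _ _
        have h9 : t * M ≤ ((rv - r)/(r' - rv)) * M := mul_le_mul_of_nonneg_right h6 hM0.le
        have h8' : δ * M ≤ (d - rv) * (r' - rv) := (le_div_iff₀ hM0).mp h8
        have h10 : ((rv - r)/(r' - rv)) * M < d - rv := by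
          rw [div_mul_eq_mul_div, div_lt_iff₀ (by linarith : (0:ℝ) < r' - rv)]
          nlinarith [mul_lt_mul_of_pos_right h7 hM0]
        exact lt_of_le_of_lt h9 h10
      have h11 := hcmin _ hc''K
      linarith
  -- the tangent set
  set T := sphere c rv ∩ frontier E with hTdef
  have hTcomp : IsCompact T := (isCompact_sphere c rv).inter_right isClosed_frontier
  have hTne : T.Nonempty := by
    by_contra hT
    rw [not_nonempty_iff_eq_empty] at hT
    have hsub : closedBall c rv ⊆ interior E := by
      intro x hx
      rcases eq_or_lt_of_le (mem_closedBall.mp hx) with he | hlt2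
      · by_contra hxint
        have hxE : x ∈ E := hball hx
        have hxfront : x ∈ frontier E := by
          rw [← closure_diff_interior]
          exact ⟨subset_closure hxE, hxint⟩
        have : x ∈ T := ⟨mem_sphere.mpr he, hxfront⟩
        rw [hT] at this
        exact this
      · exact interior_maximal (ball_subset_closedBall.trans hball) isOpen_ball (mem_ball.mpr hlt2)
    obtain ⟨ε, hε0, hεsub⟩ := (isCompact_closedBall c rv).exists_cthickening_subset_open
      isOpen_interior hsub
    have heq := cthickening_closedBall hε0.le hrv0.le c
    have hballsub : closedBall c (ε + rv) ⊆ E := by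
      rw [← heq]
      exact hεsub.trans interior_subset
    have hmem : ε + rv ∈ Av := by
      refine ⟨by linarith, c, ?_, hballsub⟩
      rw [mem_closedBall, hcv]
      linarith
    have hle := le_csSup hAvbdd hmem
    rw [← hrv] at hle
    linarith
  set u := v - c with hudef
  have hu : ‖u‖ = rv := by rw [hudef, ← dist_eq_norm]; exact hcv
  have huu : ⟪u,u⟫ = rv^2 := by rw [real_inner_self_eq_norm_sq, hu]
  have hsph : ∀ p ∈ T, ⟪p - c, p - c⟫ = rv^2 := by
    intro p hp
    have h1 : dist p c = rv := mem_sphere.mp hp.1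
    rw [real_inner_self_eq_norm_sq, ← dist_eq_norm, h1]
  -- the strict direction w₀ = cs - c
  have hδw : ∀ p ∈ T, ⟪p - c, cs - c⟫ ≤ -(rv*(r'-rv)) := by
    intro p hp
    have hpnotint : p ∉ interior E := by
      have h2 := hp.2
      rw [← closure_diff_interior] at h2
      exact h2.2
    have key : ∀ t : ℝ, 0 < t → t ≤ 1 →
        ⟪p - c, cs - c⟫ ≤ -(rv*(r'-rv)) + t * (‖cs - c‖^2/2) := by
      intro t ht0 ht1
      have hsubt := aux_ball_combo hEconv hrv0.le hr'pos.le hball hcs ht0.le ht1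
      have hdist : (1-t)*rv + t*r' ≤ dist p ((1-t) • c + t • cs) := by
        by_contra hcon2
        push_neg at hcon2
        have h3 : p ∈ ball ((1-t) • c + t • cs) ((1-t)*rv + t*r') := mem_ball.mpr hcon2
        exact hpnotint (interior_maximal (ball_subset_closedBall.trans hsubt) isOpen_ball h3)
      have hcen : (1-t) • c + t • cs = c + t • (cs - c) := by module
      rw [hcen] at hdist
      have hne : dist p (c + t • (cs - c)) = ‖(p - c) - t • (cs - c)‖ := by
        rw [dist_eq_norm]
        congr 1
        abel
      rw [hne] at hdist
      have hrad0 : 0 ≤ (1-t)*rv + t*r' := by nlinarith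
      have hsq : ((1-t)*rv + t*r')^2 ≤ ‖(p - c) - t • (cs - c)‖^2 :=
        pow_le_pow_left₀ hrad0 hdist 2
      have hexp : ‖(p - c) - t • (cs - c)‖^2
          = ‖p - c‖^2 - 2*(t*⟪p - c, cs - c⟫) + t^2*‖cs - c‖^2 := by
        rw [norm_sub_sq_real, real_inner_smul_right, norm_smul, Real.norm_eq_abs, mul_pow, sq_abs]
        try ring
      have hnp : ‖p - c‖^2 = rv^2 := by rw [← real_inner_self_eq_norm_sq]; exact hsph p hp
      rw [hexp, hnp] at hsq
      have hineq : 2*t*(rv*(r'-rv) + ⟪p - c, cs - c⟫) ≤ 2*t*(t*(‖cs - c‖^2/2)) := by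
        nlinarith [sq_nonneg (t*(r'-rv))]
      have := (mul_le_mul_iff_right₀ (by positivity : (0:ℝ) < 2*t)).mp hineq
      linarith
    by_contra hcon
    push_neg at hcon
    set X := ⟪p - c, cs - c⟫ + rv*(r'-rv) with hXdef
    have hX : 0 < X := by rw [hXdef]; linarith
    set C := ‖cs - c‖^2/2 with hCdef
    have hC : 0 ≤ C := by positivity
    set t := min 1 (X/(C+1)) with htdef
    have ht0 : 0 < t := lt_min one_pos (div_pos hX (by positivity))
    have hkey := key t ht0 (min_le_left _ _)
    have h1 : t ≤ X/(C+1) := min_le_right _ _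
    have h2 : t*C ≤ (X/(C+1))*C := mul_le_mul_of_nonneg_right h1 hC
    have h3 : (X/(C+1))*C < X := by
      rw [div_mul_eq_mul_div, div_lt_iff₀ (by positivity)]
      nlinarith
    have : ⟪p - c, cs - c⟫ ≤ -(rv*(r'-rv)) + t*C := hkey
    have hfin : X ≤ t*C := by rw [hXdef]; linarith
    linarith
  -- moving the ball in a strictly admissible direction
  have hmove : ∀ w : EuclideanSpace ℝ (Fin 2), (∀ p ∈ T, ⟪w, p - c⟫ < 0) →
      ∃ t : ℝ, 0 < t ∧ c + t • w ∈ K := by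
    intro w hwT
    by_contra hcon
    push_neg at hcon
    have hxex : ∀ n : ℕ, ∃ x, x ∈ closedBall (c + ((1:ℝ)/(n+1)) • w) rv ∧ x ∉ E := by
      intro n
      have h1 := hcon (1/(n+1)) (by positivity)
      have h2 : ¬ (closedBall (c + ((1:ℝ)/(n+1)) • w) rv ⊆ E) := h1
      rw [Set.not_subset] at h2
      obtain ⟨x, hx1, hx2⟩ := h2
      exact ⟨x, hx1, hx2⟩
    choose x hx1 hx2 using hxex
    have hνex : ∀ n : ℕ, ∃ ν : EuclideanSpace ℝ (Fin 2), ‖ν‖ = 1 ∧ 0 < ⟪ν, w⟫ ∧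
        ∀ y ∈ E, ⟪ν, y⟫ ≤ ⟪ν, c⟫ + rv + ((1:ℝ)/(n+1)) * ‖w‖ := by
      intro n
      obtain ⟨fl, s, hfs, hsx⟩ := geometric_hahn_banach_closed_point hEconv hEclosed (hx2 n)
      set z := (InnerProductSpace.toDual ℝ (EuclideanSpace ℝ (Fin 2))).symm fl with hzdef
      have hz : ∀ y, ⟪z, y⟫ = fl y := by
        intro y
        rw [hzdef]
        exact InnerProductSpace.toDual_symm_apply
      have hz0 : z ≠ 0 := by
        intro h0
        have hcE : c ∈ E := hKE hcK
        have h1 := hfs c hcE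
        have h2 : fl c = 0 := by rw [← hz c, h0, inner_zero_left]
        have h3 : fl (x n) = 0 := by rw [← hz _, h0, inner_zero_left]
        linarith
      have hznorm : 0 < ‖z‖ := norm_pos_iff.mpr hz0
      refine ⟨‖z‖⁻¹ • z, norm_smul_inv_norm hz0, ?_, ?_⟩
      all_goals {
        have hνn : ‖(‖z‖⁻¹ • z : EuclideanSpace ℝ (Fin 2))‖ = 1 := norm_smul_inv_norm hz0
        have hsep : ∀ y ∈ E, ⟪‖z‖⁻¹ • z, y⟫ < ⟪‖z‖⁻¹ • z, x n⟫ := by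
          intro y hy
          have h1 : fl y < fl (x n) := lt_trans (hfs y hy) hsx
          have h2 : ⟪z,y⟫ < ⟪z, x n⟫ := by rw [hz, hz]; exact h1
          rw [real_inner_smul_left, real_inner_smul_left]
          exact mul_lt_mul_of_pos_left h2 (inv_pos.mpr hznorm)
        have hself : ⟪(‖z‖⁻¹ • z : EuclideanSpace ℝ (Fin 2)), ‖z‖⁻¹ • z⟫ = 1 := by
          rw [real_inner_self_eq_norm_sq, hνn]
          norm_num
        have hA : ⟪‖z‖⁻¹ • z, c⟫ + rv < ⟪‖z‖⁻¹ • z, x n⟫ := by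
          have hy : c + rv • (‖z‖⁻¹ • z) ∈ E := by
            apply hball
            rw [mem_closedBall, dist_comm, dist_self_add_right, norm_smul, Real.norm_eq_abs,
              abs_of_nonneg hrv0.le, hνn, mul_one]
          have h1 := hsep _ hy
          rw [inner_add_right, real_inner_smul_right, hself] at h1
          linarith
        have hB : ⟪‖z‖⁻¹ • z, x n⟫
            ≤ ⟪‖z‖⁻¹ • z, c⟫ + ((1:ℝ)/(n+1)) * ⟪‖z‖⁻¹ • z, w⟫ + rv := by
          have h1 := hx1 n
          rw [mem_closedBall, dist_eq_norm] at h1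
          have h2 : ⟪‖z‖⁻¹ • z, x n - (c + ((1:ℝ)/(n+1)) • w)⟫ ≤ rv := by
            calc ⟪‖z‖⁻¹ • z, x n - (c + ((1:ℝ)/(n+1)) • w)⟫
                ≤ ‖(‖z‖⁻¹ • z : EuclideanSpace ℝ (Fin 2))‖ * ‖x n - (c + ((1:ℝ)/(n+1)) • w)‖ :=
                  real_inner_le_norm _ _
              _ ≤ rv := by rw [hνn, one_mul]; exact h1
          rw [inner_sub_right, inner_add_right, real_inner_smul_right] at h2
          linarith
        have hwpos : 0 < ⟪‖z‖⁻¹ • z, w⟫ := by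
          by_contra hcw
          push_neg at hcw
          have h4 : ((1:ℝ)/(n+1)) * ⟪‖z‖⁻¹ • z, w⟫ ≤ 0 :=
            mul_nonpos_iff.mpr (Or.inl ⟨by positivity, hcw⟩)
          linarith
        first
        | exact hwpos
        | · intro y hy
            have h1 := hsep y hy
            have h2 : ⟪‖z‖⁻¹ • z, w⟫ ≤ ‖w‖ := by
              calc ⟪‖z‖⁻¹ • z, w⟫ ≤ ‖(‖z‖⁻¹ • z : EuclideanSpace ℝ (Fin 2))‖ * ‖w‖ :=
                    real_inner_le_norm _ _
                _ = ‖w‖ := by rw [hνn, one_mul]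
            have h3 : ((1:ℝ)/(n+1)) * ⟪‖z‖⁻¹ • z, w⟫ ≤ ((1:ℝ)/(n+1)) * ‖w‖ :=
              mul_le_mul_of_nonneg_left h2 (by positivity)
            linarith
      }
    choose ν hν1 hν2 hν3 using hνex
    have hmemsph : ∀ n, ν n ∈ sphere (0 : EuclideanSpace ℝ (Fin 2)) 1 := by
      intro n
      rw [mem_sphere_zero_iff_norm]
      exact hν1 n
    obtain ⟨νl, hνlmem, φ, hφ, hconv2⟩ :=
      (isCompact_sphere (0:EuclideanSpace ℝ (Fin 2)) 1).tendsto_subseq hmemsph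
    have hνln : ‖νl‖ = 1 := by rwa [mem_sphere_zero_iff_norm] at hνlmem
    have hinner_cont : ∀ y : EuclideanSpace ℝ (Fin 2),
        Filter.Tendsto (fun k => ⟪ν (φ k), y⟫) Filter.atTop (nhds ⟪νl, y⟫) := by
      intro y
      exact Filter.Tendsto.inner hconv2 tendsto_const_nhds
    have hlim1 : 0 ≤ ⟪νl, w⟫ :=
      ge_of_tendsto' (hinner_cont w) (fun k => (hν2 (φ k)).le)
    have htzero : Filter.Tendsto (fun k => ((1:ℝ)/(φ k + 1)) * ‖w‖) Filter.atTop (nhds 0) := by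
      have h1 : Filter.Tendsto (fun n : ℕ => ((1:ℝ)/(n+1))) Filter.atTop (nhds 0) :=
        tendsto_one_div_add_atTop_nhds_zero_nat
      have h2 := h1.comp hφ.tendsto_atTop
      have h3 := h2.mul_const ‖w‖
      simpa using h3
    have hlim2 : ∀ y ∈ E, ⟪νl, y⟫ ≤ ⟪νl, c⟫ + rv := by
      intro y hy
      have hle : ∀ k, ⟪ν (φ k), y⟫ ≤ ⟪ν (φ k), c⟫ + rv + ((1:ℝ)/(φ k+1)) * ‖w‖ :=
        fun k => hν3 (φ k) y hy
      have hrhs : Filter.Tendsto (fun k => ⟪ν (φ k), c⟫ + rv + ((1:ℝ)/(φ k+1)) * ‖w‖)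
          Filter.atTop (nhds (⟪νl, c⟫ + rv + 0)) := ((hinner_cont c).add_const rv).add htzero
      have := le_of_tendsto_of_tendsto' (hinner_cont y) hrhs hle
      simpa using this
    have hqball : c + rv • νl ∈ closedBall c rv := by
      rw [mem_closedBall, dist_comm, dist_self_add_right, norm_smul, Real.norm_eq_abs,
        abs_of_nonneg hrv0.le, hνln, mul_one]
    have hqE : c + rv • νl ∈ E := hball hqball
    have hself : ⟪νl, νl⟫ = (1:ℝ) := by rw [real_inner_self_eq_norm_sq, hνln]; norm_num
    have hqval : ⟪νl, c + rv • νl⟫ = ⟪νl, c⟫ + rv := by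
      rw [inner_add_right, real_inner_smul_right, hself, mul_one]
    have hqmax : ∀ y ∈ E, ⟪νl, y⟫ ≤ ⟪νl, c + rv • νl⟫ := by
      intro y hy
      rw [hqval]
      exact hlim2 y hy
    have hqnotint : c + rv • νl ∉ interior E := by
      intro hqint
      obtain ⟨ε, hε0, hεsub⟩ := Metric.isOpen_iff.mp isOpen_interior _ hqint
      have hyE : (c + rv • νl) + (ε/2) • νl ∈ E := by
        apply interior_subset
        apply hεsub
        rw [mem_ball, dist_comm, dist_self_add_right, norm_smul, Real.norm_eq_abs,
          abs_of_nonneg (by linarith : (0:ℝ) ≤ ε/2), hνln, mul_one]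
        linarith
      have h5 := hqmax _ hyE
      rw [inner_add_right, real_inner_smul_right, hself, mul_one] at h5
      linarith
    have hqT : c + rv • νl ∈ T := by
      constructor
      · rw [mem_sphere, dist_comm, dist_self_add_right, norm_smul, Real.norm_eq_abs,
          abs_of_nonneg hrv0.le, hνln, mul_one]
      · rw [← closure_diff_interior]
        exact ⟨subset_closure hqE, hqnotint⟩
    have h6 := hwT _ hqT
    have hqc : (c + rv • νl) - c = rv • νl := add_sub_cancel_left c (rv • νl)
    rw [hqc, real_inner_smul_right] at h6
    have h7 : ⟪w, νl⟫ < 0 := by nlinarith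
    rw [real_inner_comm] at h7
    linarith
  -- the cone hypothesis
  have hH : ∀ w : EuclideanSpace ℝ (Fin 2), (∀ p ∈ T, ⟪w, p - c⟫ ≤ 0) → ⟪w, u⟫ ≤ 0 := by
    intro w hwle
    by_contra hcon
    push_neg at hcon
    have hδ₀pos : 0 < rv*(r'-rv) := mul_pos hrv0 (by linarith)
    set ε := ⟪w,u⟫/(2*(|⟪cs - c, u⟫| + 1)) with hεdef
    have hεpos : 0 < ε := div_pos hcon (by positivity)
    have hwp' : ∀ p ∈ T, ⟪w + ε • (cs - c), p - c⟫ < 0 := by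
      intro p hp
      rw [inner_add_left, real_inner_smul_left]
      have h1 := hwle p hp
      have h2 : ⟪cs - c, p - c⟫ ≤ -(rv*(r'-rv)) := by
        rw [real_inner_comm]
        exact hδw p hp
      nlinarith [mul_le_mul_of_nonneg_left h2 hεpos.le, mul_pos hεpos hδ₀pos]
    have hwu' : 0 < ⟪w + ε • (cs - c), u⟫ := by
      rw [inner_add_left, real_inner_smul_left]
      have h1 : ε * |⟪cs - c, u⟫| < ⟪w,u⟫ := by
        rw [hεdef, div_mul_eq_mul_div, div_lt_iff₀ (by positivity)]
        nlinarith [abs_nonneg ⟪cs - c, u⟫]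
      have h2 := neg_abs_le ⟪cs - c, u⟫
      nlinarith [mul_le_mul_of_nonneg_left h2 hεpos.le]
    obtain ⟨t₀, ht₀, hKt₀⟩ := hmove _ hwp'
    set wε := w + ε • (cs - c) with hwεdef
    set t := min t₀ (⟪wε,u⟫/(‖wε‖^2+1)) with htdef
    have ht0 : 0 < t := lt_min ht₀ (div_pos hwu' (by positivity))
    have htt₀ : t ≤ t₀ := min_le_left _ _
    have htK : c + t • wε ∈ K := by
      have ht₀ne : t₀ ≠ 0 := ne_of_gt ht₀
      have hct : (t/t₀)*t₀ = t := div_mul_cancel₀ _ ht₀ne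
      have hs : (1 - t/t₀) • c + (t/t₀) • (c + t₀ • wε) = c + ((t/t₀)*t₀) • wε := by
        module
      rw [hct] at hs
      rw [← hs]
      exact hKconv hcK hKt₀ (by
        have : t/t₀ ≤ 1 := (div_le_one ht₀).mpr htt₀
        linarith) (by positivity) (by ring)
    have hdless : dist v (c + t • wε) < rv := by
      have h1 : v - (c + t • wε) = u - t • wε := by rw [hudef]; abel
      rw [dist_eq_norm, h1]
      have h2 : ‖u - t • wε‖^2 = ‖u‖^2 - 2*(t*⟪u,wε⟫) + t^2*‖wε‖^2 := by
        rw [norm_sub_sq_real, real_inner_smul_right, norm_smul, Real.norm_eq_abs, mul_pow, sq_abs]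
        try ring
      have h4 : t ≤ ⟪wε,u⟫/(‖wε‖^2+1) := min_le_right _ _
      have h5 : t * (‖wε‖^2+1) ≤ ⟪wε,u⟫ := by
        rw [← le_div_iff₀ (by positivity)]
        exact h4
      have h3 : t * ‖wε‖^2 < ⟪wε, u⟫ := by nlinarith
      have hcomm : ⟪u, wε⟫ = ⟪wε, u⟫ := real_inner_comm _ _
      have h6 : ‖u - t•wε‖^2 < rv^2 := by
        rw [h2, hu, hcomm]
        nlinarith [mul_pos ht0 (by linarith : (0:ℝ) < 2*⟪wε,u⟫ - t*‖wε‖^2)]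
      nlinarith [norm_nonneg (u - t•wε)]
    have h7 := hKfar _ htK
    linarith
  obtain ⟨p₁, hp₁T, p₂, hp₂T, a, b, ha, hb, heq⟩ := aux_key hrv0 hTcomp hTne hsph huu hH
  refine ⟨c, p₁, p₂, a, b, ?_, hball, hp₁T.2, hp₂T.2, ?_, ?_, ha, hb, ?_⟩
  · rw [← dist_eq_norm]
    exact hcv
  · rw [← dist_eq_norm]
    exact mem_sphere.mp hp₁T.1
  · rw [← dist_eq_norm]
    exact mem_sphere.mp hp₂T.1
  · exact heq
end
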